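/- arXiv:1510.04479 — 2 statements merged into one kernel-verified Lean document; each statement's English description precedes it below -/
import Mathlib

section
/- The function W(x) = (1 + |x|^2/3)^{-1/2} on ℝ^3 satisfies the equation -ΔW = W^5, i.e., for all x ∈ ℝ^3, -ΔW(x) = W(x)^5. -/
open MeasureTheory

noncomputable def laplacianR (f : EuclideanSpace ℝ (Fin 3) → ℝ)
    (x : EuclideanSpace ℝ (Fin 3)) : ℝ :=
  ∑ i : Fin 3,
    fderiv ℝ (fun y => fderiv ℝ f y (EuclideanSpace.single i (1 : ℝ))) x
      (EuclideanSpace.single i (1 : ℝ))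

/-- The Aubin–Talenti ground state `W`. -/
noncomputable def groundStateW (x : EuclideanSpace ℝ (Fin 3)) : ℝ :=
  (Real.sqrt (1 + ‖x‖ ^ 2 / 3))⁻¹

section Aux

local notation "E3" => EuclideanSpace ℝ (Fin 3)

noncomputable def uF (x : E3) : ℝ := 1 + ‖x‖ ^ 2 / 3

lemma uF_pos (x : E3) : 0 < uF x := by unfold uF; positivity

lemma sqrt_uF_pos (x : E3) : 0 < Real.sqrt (uF x) := Real.sqrt_pos.2 (uF_pos x)

lemma sq_sqrt_uF (x : E3) : Real.sqrt (uF x) ^ 2 = uF x := Real.sq_sqrt (uF_pos x).le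

lemma hasFDerivAt_uF (x : E3) :
    HasFDerivAt uF ((2/3 : ℝ) • innerSL ℝ x) x := by
  have h := (hasStrictFDerivAt_norm_sq x).hasFDerivAt
  have h2 := (h.const_mul (3⁻¹ : ℝ)).const_add 1
  have huF : uF = fun y : E3 => 1 + 3⁻¹ * ‖y‖ ^ 2 := by
    funext y; rw [uF]; ring
  rw [huF]
  refine h2.congr_fderiv ?_
  ext v
  simp [smul_smul]
  ring

noncomputable def cW (x : E3) : ℝ := -(1/3) * (uF x * Real.sqrt (uF x))⁻¹

lemma hasFDerivAt_W (x : E3) :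
    HasFDerivAt groundStateW (cW x • innerSL ℝ x) x := by
  have hu := uF_pos x
  have hs := sqrt_uF_pos x
  have h1 : HasDerivAt Real.sqrt (1 / (2 * Real.sqrt (uF x))) (uF x) :=
    Real.hasDerivAt_sqrt hu.ne'
  have h2 : HasDerivAt (fun s => (Real.sqrt s)⁻¹)
      (-(1 / (2 * Real.sqrt (uF x))) / (Real.sqrt (uF x)) ^ 2) (uF x) := h1.inv hs.ne'
  have h3 := h2.comp_hasFDerivAt x (hasFDerivAt_uF x)
  have : groundStateW = fun y => (Real.sqrt (uF y))⁻¹ := rfl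
  rw [this]
  refine h3.congr_fderiv ?_
  rw [smul_smul]
  congr 1
  rw [cW, sq_sqrt_uF]
  field_simp

lemma fderiv_W_apply (y : E3) (i : Fin 3) :
    fderiv ℝ groundStateW y (EuclideanSpace.single i (1 : ℝ)) = cW y * y i := by
  rw [(hasFDerivAt_W y).fderiv]
  simp [EuclideanSpace.inner_single_right]

noncomputable def cW2 (x : E3) : ℝ := (1/3) * ((uF x) ^ 2 * Real.sqrt (uF x))⁻¹

lemma hasFDerivAt_cW (x : E3) :
    HasFDerivAt cW (cW2 x • innerSL ℝ x) x := by
  have hu := uF_pos x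
  have hs := sqrt_uF_pos x
  have h1 : HasDerivAt (fun s : ℝ => s * Real.sqrt s)
      (1 * Real.sqrt (uF x) + uF x * (1 / (2 * Real.sqrt (uF x)))) (uF x) :=
    (hasDerivAt_id _).mul (Real.hasDerivAt_sqrt hu.ne')
  have hne : uF x * Real.sqrt (uF x) ≠ 0 := by positivity
  have h2 := ((h1.inv hne).const_mul (-(1/3) : ℝ)).comp_hasFDerivAt x (hasFDerivAt_uF x)
  have : cW = fun y => -(1/3) * (uF y * Real.sqrt (uF y))⁻¹ := rfl
  rw [this]
  refine h2.congr_fderiv ?_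
  rw [smul_smul]
  congr 1
  rw [cW2]
  set s := Real.sqrt (uF x) with hsdef
  have h4 : s ^ 2 = uF x := sq_sqrt_uF x
  rw [← h4]
  field_simp
  ring

lemma fderiv_gi (x : E3) (i : Fin 3) :
    fderiv ℝ (fun y => cW y * y i) x (EuclideanSpace.single i (1 : ℝ))
      = cW2 x * (x i) ^ 2 + cW x := by
  have hp : HasFDerivAt (fun y : E3 => y i) (EuclideanSpace.proj i : E3 →L[ℝ] ℝ) x :=
    (EuclideanSpace.proj i : E3 →L[ℝ] ℝ).hasFDerivAt
  have h := (hasFDerivAt_cW x).mul hp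
  change fderiv ℝ (cW * fun y : E3 => y i) x _ = _
  rw [h.fderiv]
  simp [EuclideanSpace.inner_single_right]
  ring

lemma sum_sq (x : E3) : ∑ i : Fin 3, x i ^ 2 = ‖x‖ ^ 2 := by
  rw [EuclideanSpace.norm_eq, Real.sq_sqrt (by positivity)]
  simp [sq_abs]

end Aux

theorem stmt0 : ∀ x : EuclideanSpace ℝ (Fin 3),
    -laplacianR groundStateW x = groundStateW x ^ 5 := by
  intro x
  have hrw : ∀ i : Fin 3, (fun y => fderiv ℝ groundStateW y (EuclideanSpace.single i (1:ℝ)))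
      = fun y => cW y * y i := fun i => funext fun y => fderiv_W_apply y i
  have hlap : laplacianR groundStateW x
      = ∑ i : Fin 3, (cW2 x * (x i) ^ 2 + cW x) := by
    unfold laplacianR
    refine Finset.sum_congr rfl fun i _ => ?_
    rw [hrw i, fderiv_gi]
  rw [hlap, Finset.sum_add_distrib, ← Finset.mul_sum, sum_sq]
  have hu := uF_pos x
  have hs := sqrt_uF_pos x
  have h4 : Real.sqrt (uF x) ^ 2 = uF x := sq_sqrt_uF x
  have ht : ‖x‖ ^ 2 = 3 * uF x - 3 := by rw [uF]; ring
  rw [cW2, cW, groundStateW]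
  have : (1 + ‖x‖ ^ 2 / 3) = uF x := rfl
  rw [this, ht]
  simp only [Finset.sum_const, Finset.card_univ, Fintype.card_fin, nsmul_eq_mul]
  set s := Real.sqrt (uF x) with hsdef
  have h4' : s ^ 2 = uF x := sq_sqrt_uF x
  rw [← h4']
  field_simp
  ring
end

section
/- There is a constant C > 0 such that for every radial φ ∈ Ḣ¹(ℝ^3) and every m ≥ 0: ∫_{|x|>m} |φ|⁶ dx ≤ C · ‖∇φ‖²_{L²(|x|>m)} · ‖φ/|x|‖⁴_{L²(|x|>m)}. -/
open MeasureTheory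

set_option maxHeartbeats 1000000

local notation "E3" => EuclideanSpace ℝ (Fin 3)

section StraussAux
open Set Metric

lemma aux_finrank : Module.finrank ℝ (EuclideanSpace ℝ (Fin 3)) = 3 :=
  finrank_euclideanSpace_fin

lemma integral3 (U : ℝ → ℝ) :
    ∫ x : E3, U ‖x‖ =
      3 * (volume (ball (0:E3) 1)).toReal * ∫ r in Ioi (0:ℝ), r ^ 2 * U r := by
  rw [integral_fun_norm_addHaar volume U]
  simp only [aux_finrank, smul_eq_mul, nsmul_eq_mul, Nat.cast_ofNat]
  rw [mul_assoc]
  simp only [Measure.real]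

lemma integrable3 (U : ℝ → ℝ) (hU : Measurable U)
    (hint : Integrable (fun x : E3 => U ‖x‖)) :
    IntegrableOn (fun r => r ^ 2 * U r) (Ioi (0:ℝ)) := by
  have hs : MeasurableSet ({0}ᶜ : Set E3) := (measurableSet_singleton 0).compl
  have h1 : Integrable (fun x : E3 => U ‖x‖)
      ((volume : Measure E3).restrict {0}ᶜ) := by
    rwa [MeasureTheory.restrict_compl_singleton]
  rw [← map_comap_subtype_coe hs,
    (MeasurableEmbedding.subtype_coe hs).integrable_map_iff] at h1
  have h3 : Integrable (fun p : sphere (0:E3) 1 × Ioi (0:ℝ) => U p.2)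
      ((volume : Measure E3).toSphere.prod (Measure.volumeIoiPow 2)) := by
    have hmp := (volume : Measure E3).measurePreserving_homeomorphUnitSphereProd
    rw [aux_finrank] at hmp
    have := (hmp.integrable_comp_emb (Homeomorph.measurableEmbedding _)
      (g := fun p : sphere (0:E3) 1 × Ioi (0:ℝ) => U p.2)).mp
    apply this
    convert h1 using 1
    funext x
    simp [homeomorphUnitSphereProd, homeomorphSphereProd]
  have hne : ((volume : Measure E3).toSphere) ≠ 0 := by
    rw [← Measure.measure_univ_ne_zero, Measure.toSphere_apply_univ, aux_finrank]
    simp only [ne_eq, mul_eq_zero, not_or]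
    constructor
    · norm_num
    · exact (measure_ball_pos volume 0 one_pos).ne'
  haveI := ae_neBot.mpr hne
  have h4 : Integrable (fun r : Ioi (0:ℝ) => U r.1) (Measure.volumeIoiPow 2) :=
    (h3.prod_right_ae.exists).choose_spec
  rw [Measure.volumeIoiPow, integrable_withDensity_iff] at h4
  rotate_left
  · exact (measurable_subtype_coe.pow_const 2).ennreal_ofReal
  · exact ae_of_all _ fun r => ENNReal.ofReal_lt_top
  have h5 : Integrable (fun r : Ioi (0:ℝ) => r.1 ^ 2 * U r.1)
      (Measure.comap Subtype.val volume) := by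
    refine h4.congr (ae_of_all _ fun r => ?_)
    simp only []
    rw [ENNReal.toReal_ofReal (sq_nonneg _), mul_comm]
  rw [IntegrableOn, ← map_comap_subtype_coe measurableSet_Ioi,
    (MeasurableEmbedding.subtype_coe measurableSet_Ioi).integrable_map_iff]
  exact h5

noncomputable def e3 : EuclideanSpace ℝ (Fin 3) := EuclideanSpace.single 0 1
lemma norm_e3 : ‖e3‖ = 1 := by
  rw [e3, EuclideanSpace.norm_single]; norm_num
lemma norm_smul_e3 (r : ℝ) (hr : 0 ≤ r) : ‖r • e3‖ = r := by
  rw [norm_smul, norm_e3, Real.norm_eq_abs, abs_of_nonneg hr, mul_one]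


lemma radial_setIntegral (m : ℝ) (hm : 0 ≤ m) (w : E3 → ℝ) (hw : Measurable w)
    (hrad : ∀ x : E3, m < ‖x‖ → w x = w (‖x‖ • e3))
    (hint : Integrable w (volume.restrict {y : E3 | m < ‖y‖})) :
    IntegrableOn (fun r => r ^ 2 * w (r • e3)) (Ioi m) ∧
      ∫ y in {y : E3 | m < ‖y‖}, w y =
        3 * (volume (ball (0:E3) 1)).toReal * ∫ r in Ioi m, r ^ 2 * w (r • e3) := by
  set S : Set E3 := {y : E3 | m < ‖y‖} with hS
  have hSm : MeasurableSet S :=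
    (isOpen_lt continuous_const continuous_norm).measurableSet
  set U : ℝ → ℝ := (Ioi m).indicator (fun r => w (r • e3)) with hU
  have key : ∀ x : E3, S.indicator w x = U ‖x‖ := by
    intro x
    simp only [hU, hS, indicator_apply, mem_Ioi, mem_setOf_eq]
    by_cases hx : m < ‖x‖
    · rw [if_pos hx, if_pos hx, ← hrad x hx]
    · rw [if_neg hx, if_neg hx]
  have hUmeas : Measurable U :=
    (hw.comp (measurable_id.smul_const e3)).indicator measurableSet_Ioi
  have hIind : Integrable (fun x : E3 => U ‖x‖) := by
    have : Integrable (S.indicator w) := (integrable_indicator_iff hSm).mpr hint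
    exact this.congr (ae_of_all _ key)
  have hIOn : IntegrableOn (fun r => r ^ 2 * U r) (Ioi (0:ℝ)) :=
    integrable3 U hUmeas hIind
  have hind2 : (fun r : ℝ => r ^ 2 * U r)
      = (Ioi m).indicator (fun r => r ^ 2 * w (r • e3)) := by
    funext r
    simp only [hU, indicator_apply, mem_Ioi]
    by_cases hr : m < r
    · rw [if_pos hr, if_pos hr]
    · rw [if_neg hr, if_neg hr, mul_zero]
  constructor
  · have h1 : IntegrableOn (fun r => r ^ 2 * U r) (Ioi m) :=
      hIOn.mono_set (Ioi_subset_Ioi hm)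
    refine h1.congr_fun (fun r hr => ?_) measurableSet_Ioi
    simp only [hU, indicator_apply, mem_Ioi, if_pos (mem_Ioi.mp hr)]
  · have h2 : ∫ y in S, w y = ∫ x : E3, S.indicator w x :=
      (integral_indicator hSm).symm
    rw [h2, integral_congr_ae (ae_of_all _ key), integral3 U]
    congr 1
    rw [hind2, setIntegral_indicator measurableSet_Ioi,
      Ioi_inter_Ioi, max_eq_right hm]

lemma fderiv_norm_radial {φ : E3 → ℂ} (hφ : ContDiff ℝ 1 φ)
    (hrad : ∀ x y : E3, ‖x‖ = ‖y‖ → φ x = φ y) (x y : E3) (h : ‖x‖ = ‖y‖) :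
    ‖fderiv ℝ φ x‖ = ‖fderiv ℝ φ y‖ := by
  set T : E3 ≃ₗᵢ[ℝ] E3 := Submodule.reflection (ℝ ∙ (x - y))ᗮ with hT
  have hTx : T x = y := Submodule.reflection_sub h
  have hφT : φ ∘ T = φ := funext fun z => hrad _ _ (T.norm_map z)
  have h1 : fderiv ℝ φ x = fderiv ℝ (φ ∘ T) x := by rw [hφT]
  have h2 : fderiv ℝ (φ ∘ T) x
      = (fderiv ℝ φ (T x)).comp (T.toContinuousLinearEquiv : E3 →L[ℝ] E3) := by
    have := T.toContinuousLinearEquiv.comp_right_fderiv (f := φ) (x := x)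
    simpa using this
  have h3 : ‖(fderiv ℝ φ (T x)).comp (T.toContinuousLinearEquiv : E3 →L[ℝ] E3)‖
      = ‖fderiv ℝ φ (T x)‖ := by
    have := (fderiv ℝ φ (T x)).opNorm_comp_linearIsometryEquiv T
    convert this using 2
  rw [h1, h2, h3, hTx]

lemma amgm2 {t : ℝ} (ht : 0 < t) (a b : ℝ) : 2 * a * b ≤ t * a ^ 2 + t⁻¹ * b ^ 2 := by
  have key : t * a ^ 2 + t⁻¹ * b ^ 2 - 2 * a * b = (t * a - b) ^ 2 / t := by
    field_simp
    ring
  nlinarith [div_nonneg (sq_nonneg (t * a - b)) ht.le]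

lemma core1d (g : ℝ → ℂ) (hg : ContDiff ℝ 1 g) (m : ℝ) (hm : 0 ≤ m)
    (D : ℝ → ℝ) (hDc : Continuous D) (hDb : ∀ r, ‖deriv g r‖ ≤ D r)
    (hB : IntegrableOn (fun r => ‖g r‖ ^ 2) (Ioi m))
    (hA : IntegrableOn (fun r => r ^ 2 * D r ^ 2) (Ioi m)) :
    ∫ r in Ioi m, r ^ 2 * ‖g r‖ ^ 6 ≤
      4 * (∫ r in Ioi m, r ^ 2 * D r ^ 2) * (∫ r in Ioi m, ‖g r‖ ^ 2) ^ 2 := by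
  set A : ℝ := ∫ r in Ioi m, r ^ 2 * D r ^ 2 with hAdef
  set B : ℝ := ∫ r in Ioi m, ‖g r‖ ^ 2 with hBdef
  have hA0 : 0 ≤ A := setIntegral_nonneg measurableSet_Ioi (fun r _ => by positivity)
  have hB0 : 0 ≤ B := setIntegral_nonneg measurableSet_Ioi (fun r _ => by positivity)
  have hgd : Differentiable ℝ g := hg.differentiable one_ne_zero
  have hg' : ∀ r, HasDerivAt g (deriv g r) r := fun r => (hgd r).hasDerivAt
  set u : ℝ → ℝ := fun r => (g r).re with hu
  set v : ℝ → ℝ := fun r => (g r).im with hv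
  have hud : ∀ r, HasDerivAt u ((deriv g r).re) r := fun r =>
    (Complex.reCLM.hasFDerivAt.comp_hasDerivAt r (hg' r))
  have hvd : ∀ r, HasDerivAt v ((deriv g r).im) r := fun r =>
    (Complex.imCLM.hasFDerivAt.comp_hasDerivAt r (hg' r))
  have hnorm : ∀ r, ‖g r‖ ^ 2 = u r ^ 2 + v r ^ 2 := fun r => by
    rw [Complex.sq_norm, Complex.normSq_apply, hu, hv]; ring
  have hnorm' : ∀ r, (deriv g r).re ^ 2 + (deriv g r).im ^ 2 ≤ D r ^ 2 := by
    intro r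
    have h1 : ‖deriv g r‖ ^ 2 ≤ D r ^ 2 := by
      have h2 := hDb r
      have h0 : (0:ℝ) ≤ ‖deriv g r‖ := norm_nonneg _
      nlinarith
    calc (deriv g r).re ^ 2 + (deriv g r).im ^ 2 = ‖deriv g r‖ ^ 2 := by
          rw [Complex.sq_norm, Complex.normSq_apply]; ring
      _ ≤ D r ^ 2 := h1
  set h : ℝ → ℝ := fun r => ‖g r‖ ^ 2 with hh
  set h' : ℝ → ℝ := fun r => 2 * u r * (deriv g r).re + 2 * v r * (deriv g r).im with hh'
  have hh0 : ∀ r, 0 ≤ h r := fun r => by rw [hh]; positivity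
  have hhd : ∀ r, HasDerivAt h (h' r) r := by
    intro r
    have h1 : HasDerivAt (fun r => u r ^ 2 + v r ^ 2)
        (2 * u r ^ 1 * (deriv g r).re + 2 * v r ^ 1 * (deriv g r).im) r :=
      ((hud r).pow 2).add ((hvd r).pow 2)
    have h2 : HasDerivAt (fun r => u r ^ 2 + v r ^ 2) (h' r) r := by
      convert h1 using 1; rw [hh']; ring
    refine HasDerivAt.congr_of_eventuallyEq h2 ?_
    exact Filter.Eventually.of_forall fun s => (hnorm s)
  have hgc : Continuous g := hg.continuous
  have hdgc : Continuous (deriv g) := hg.continuous_deriv le_rfl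
  have huc : Continuous u := by rw [hu]; fun_prop
  have hvc : Continuous v := by rw [hv]; fun_prop
  have hh'c : Continuous h' := by rw [hh']; fun_prop
  have hhc : Continuous h := by rw [hh]; fun_prop
  -- key pointwise bound
  have key : ∀ r ∈ Ioi m, ∀ t : ℝ, 0 < t → h r ≤ t * B + t⁻¹ * (A / r ^ 2) := by
    intro r hr t ht
    have hr0 : 0 < r := lt_of_le_of_lt hm hr
    have main : ∀ R, r ≤ R → h r ≤ h R + t * B + t⁻¹ * (A / r ^ 2) := by
      intro R hrR
      have ftc : ∫ s in r..R, h' s = h R - h r :=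
        intervalIntegral.integral_eq_sub_of_hasDerivAt (fun s _ => hhd s)
          (hh'c.intervalIntegrable r R)
      have hbound : ∀ s ∈ Icc r R, -h' s ≤ t * h s + t⁻¹ * D s ^ 2 := by
        intro s _
        have a1 := amgm2 ht (u s) (-(deriv g s).re)
        have a2 := amgm2 ht (v s) (-(deriv g s).im)
        have a3 := mul_le_mul_of_nonneg_left (hnorm' s) (inv_pos.mpr ht).le
        have e1 : h s = u s ^ 2 + v s ^ 2 := hnorm s
        rw [hh']
        simp only []
        nlinarith [a1, a2, a3]
      have mono1 : ∫ s in r..R, (-h' s) ≤ ∫ s in r..R, (t * h s + t⁻¹ * D s ^ 2) := by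
        refine intervalIntegral.integral_mono_on hrR ?_ ?_ hbound
        · exact (hh'c.neg).intervalIntegrable r R
        · exact ((continuous_const.mul hhc).add (continuous_const.mul (hDc.pow 2))).intervalIntegrable r R
      have isplit : ∫ s in r..R, (t * h s + t⁻¹ * D s ^ 2)
          = t * (∫ s in r..R, h s) + t⁻¹ * (∫ s in r..R, D s ^ 2) := by
        rw [intervalIntegral.integral_add (f := fun s => t * h s) (g := fun s => t⁻¹ * D s ^ 2) ((continuous_const.mul hhc).intervalIntegrable r R)
          ((continuous_const.mul (hDc.pow 2)).intervalIntegrable r R),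
          intervalIntegral.integral_const_mul, intervalIntegral.integral_const_mul]
      have i3 : ∫ s in r..R, h s ≤ B := by
        rw [intervalIntegral.integral_of_le hrR]
        refine setIntegral_mono_set hB ?_ ?_
        · exact Filter.Eventually.of_forall fun s => by positivity
        · exact HasSubset.Subset.eventuallyLE (fun s hs => lt_trans hr hs.1)
      have i4 : ∫ s in r..R, D s ^ 2 ≤ A / r ^ 2 := by
        have p1 : ∀ s ∈ Icc r R, D s ^ 2 ≤ (s ^ 2 * D s ^ 2) / r ^ 2 := by
          intro s hs
          rw [le_div_iff₀ (by positivity : (0:ℝ) < r ^ 2)]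
          have hrs : r ^ 2 ≤ s ^ 2 := by nlinarith [hs.1, hr0]
          nlinarith [sq_nonneg (D s), hrs]
        have p2 : ∫ s in r..R, D s ^ 2 ≤ ∫ s in r..R, (s ^ 2 * D s ^ 2) / r ^ 2 := by
          refine intervalIntegral.integral_mono_on hrR ((hDc.pow 2).intervalIntegrable r R)
            ?_ p1
          exact (((continuous_id.pow 2).mul (hDc.pow 2)).div_const _).intervalIntegrable r R
        have p3 : ∫ s in r..R, (s ^ 2 * D s ^ 2) / r ^ 2
            = (∫ s in r..R, s ^ 2 * D s ^ 2) / r ^ 2 := intervalIntegral.integral_div _ _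
        have p4 : ∫ s in r..R, s ^ 2 * D s ^ 2 ≤ A := by
          rw [intervalIntegral.integral_of_le hrR]
          refine setIntegral_mono_set hA ?_ ?_
          · exact Filter.Eventually.of_forall fun s => by positivity
          · exact HasSubset.Subset.eventuallyLE (fun s hs => lt_trans hr hs.1)
        calc ∫ s in r..R, D s ^ 2 ≤ (∫ s in r..R, s ^ 2 * D s ^ 2) / r ^ 2 := by
              rw [← p3]; exact p2
          _ ≤ A / r ^ 2 := by
              exact (div_le_div_iff_of_pos_right (by positivity)).mpr p4
      have n1 : t * (∫ s in r..R, h s) ≤ t * B := mul_le_mul_of_nonneg_left i3 ht.le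
      have n2 : t⁻¹ * (∫ s in r..R, D s ^ 2) ≤ t⁻¹ * (A / r ^ 2) :=
        mul_le_mul_of_nonneg_left i4 (inv_pos.mpr ht).le
      have mono1' : -(h R - h r) ≤ t * (∫ s in r..R, h s) + t⁻¹ * (∫ s in r..R, D s ^ 2) := by
        rw [← ftc, ← intervalIntegral.integral_neg, ← isplit] at *
        exact mono1
      linarith
    have eps : ∀ ε : ℝ, 0 < ε → ∃ R, r ≤ R ∧ h R < ε := by
      intro ε hε
      by_contra hcon
      push_neg at hcon
      have hi : IntegrableOn h (Ioi r) := hB.mono_set (Ioi_subset_Ioi (le_of_lt hr))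
      have hconst : Integrable (fun _ : ℝ => ε) (volume.restrict (Ioi r)) := by
        refine hi.mono' aestronglyMeasurable_const ?_
        refine (ae_restrict_iff' measurableSet_Ioi).mpr (ae_of_all _ fun s hs => ?_)
        rw [Real.norm_eq_abs, abs_of_pos hε]
        exact hcon s (le_of_lt hs)
      rw [integrable_const_iff] at hconst
      rcases hconst with h0 | hfin
      · exact hε.ne' h0
      · rw [isFiniteMeasure_restrict, Real.volume_Ioi] at hfin
        exact hfin rfl
    refine le_of_forall_pos_le_add fun ε hε => ?_
    obtain ⟨R, hrR, hRε⟩ := eps ε hε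
    linarith [main R hrR]
  -- square bound
  have key2 : ∀ r ∈ Ioi m, (r * h r) ^ 2 ≤ 4 * A * B := by
    intro r hr
    have hr0 : 0 < r := lt_of_le_of_lt hm hr
    have hs : ∀ s : ℝ, 0 < s → r * h r ≤ s * B + A / s := by
      intro s hs0
      have ht0 : 0 < s / r := div_pos hs0 hr0
      have hk := key r hr (s / r) ht0
      have e : r * ((s / r) * B + (s / r)⁻¹ * (A / r ^ 2)) = s * B + A / s := by
        field_simp
      calc r * h r ≤ r * ((s / r) * B + (s / r)⁻¹ * (A / r ^ 2)) :=
            mul_le_mul_of_nonneg_left hk hr0.le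
        _ = s * B + A / s := e
    have hw0 : 0 ≤ r * h r := mul_nonneg hr0.le (hh0 r)
    set w := r * h r with hwdef
    rcases eq_or_lt_of_le hw0 with hweq | hwpos
    · rw [← hweq]
      have : (0:ℝ) ^ 2 = 0 := by norm_num
      rw [this]
      exact mul_nonneg (mul_nonneg (by norm_num) hA0) hB0
    · rcases eq_or_lt_of_le hB0 with hBeq | hBpos
      · rcases eq_or_lt_of_le hA0 with hAeq | hApos
        · have h1 := hs 1 one_pos
          rw [← hBeq, ← hAeq] at h1
          simp at h1
          nlinarith
        · have h1 := hs (2 * A / w) (by positivity)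
          have e : (2 * A / w) * B + A / (2 * A / w) = w / 2 := by
            rw [← hBeq]
            field_simp
            ring
          nlinarith
      · have h1 := hs (w / (2 * B)) (by positivity)
        have e : (w / (2 * B)) * B + A / (w / (2 * B)) = w / 2 + 2 * A * B / w := by
          field_simp
        rw [e] at h1
        have h2 : w / 2 ≤ 2 * A * B / w := by linarith
        have h3 : w / 2 * w ≤ 2 * A * B / w * w := mul_le_mul_of_nonneg_right h2 hwpos.le
        have e2 : 2 * A * B / w * w = 2 * A * B := by field_simp
        nlinarith
  -- conclude
  have pt : ∀ r ∈ Ioi m, r ^ 2 * ‖g r‖ ^ 6 ≤ (4 * A * B) * ‖g r‖ ^ 2 := by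
    intro r hr
    have h1 := key2 r hr
    have h2 : (r * h r) ^ 2 * h r ≤ (4 * A * B) * h r :=
      mul_le_mul_of_nonneg_right h1 (hh0 r)
    calc r ^ 2 * ‖g r‖ ^ 6 = (r * h r) ^ 2 * h r := by rw [hh]; ring
      _ ≤ (4 * A * B) * h r := h2
      _ = (4 * A * B) * ‖g r‖ ^ 2 := by rw [hh]
  have hint2 : Integrable (fun r => (4 * A * B) * ‖g r‖ ^ 2) (volume.restrict (Ioi m)) :=
    hB.const_mul _
  have final : ∫ r in Ioi m, r ^ 2 * ‖g r‖ ^ 6 ≤ ∫ r in Ioi m, (4 * A * B) * ‖g r‖ ^ 2 :=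
    integral_mono_of_nonneg (Filter.Eventually.of_forall fun r => by positivity) hint2
      ((ae_restrict_iff' measurableSet_Ioi).mpr (ae_of_all _ pt))
  calc ∫ r in Ioi m, r ^ 2 * ‖g r‖ ^ 6 ≤ ∫ r in Ioi m, (4 * A * B) * ‖g r‖ ^ 2 := final
    _ = 4 * A * B * B := by rw [MeasureTheory.integral_const_mul]
    _ ≤ 4 * A * B ^ 2 := le_of_eq (by ring)

end StraussAux

open Set Metric in
/-- Exterior L⁶ estimate for radial functions:
`∫_{|x|>m} |φ|⁶ ≲ ‖∇φ‖²_{L²(|x|>m)} ‖φ/|x|‖⁴_{L²(|x|>m)}`. -/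
theorem stmt6 : ∃ C > (0 : ℝ), ∀ φ : EuclideanSpace ℝ (Fin 3) → ℂ,
    ContDiff ℝ 1 φ →
    (∀ x y : EuclideanSpace ℝ (Fin 3), ‖x‖ = ‖y‖ → φ x = φ y) →
    ∀ m : ℝ, 0 ≤ m →
    Integrable (fun y => ‖fderiv ℝ φ y‖ ^ 2)
      (volume.restrict {y : EuclideanSpace ℝ (Fin 3) | m < ‖y‖}) →
    Integrable (fun y => ‖φ y‖ ^ 2 / ‖y‖ ^ 2)
      (volume.restrict {y : EuclideanSpace ℝ (Fin 3) | m < ‖y‖}) →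
    Integrable (fun y => ‖φ y‖ ^ 6)
      (volume.restrict {y : EuclideanSpace ℝ (Fin 3) | m < ‖y‖}) →
      (∫ y in {y : EuclideanSpace ℝ (Fin 3) | m < ‖y‖}, ‖φ y‖ ^ 6) ≤
        C * (∫ y in {y : EuclideanSpace ℝ (Fin 3) | m < ‖y‖}, ‖fderiv ℝ φ y‖ ^ 2) *
          (∫ y in {y : EuclideanSpace ℝ (Fin 3) | m < ‖y‖}, ‖φ y‖ ^ 2 / ‖y‖ ^ 2) ^ 2 := by
  have hc0 : 0 < (volume (ball (0:E3) 1)).toReal :=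
    ENNReal.toReal_pos (measure_ball_pos volume 0 one_pos).ne' measure_ball_lt_top.ne
  set c : ℝ := (volume (ball (0:E3) 1)).toReal with hc
  refine ⟨4 / (9 * c ^ 2), by positivity, ?_⟩
  intro φ hφ hrad m hm hI1 hI2 hI3
  have hφc : Continuous φ := hφ.continuous
  have hfc : Continuous (fun y : E3 => fderiv ℝ φ y) := hφ.continuous_fderiv one_ne_zero
  have hnx : ∀ x : E3, ‖(‖x‖ • e3)‖ = ‖x‖ := fun x => norm_smul_e3 _ (norm_nonneg x)
  -- three transfers
  obtain ⟨P1, E1⟩ := radial_setIntegral m hm (fun y => ‖fderiv ℝ φ y‖ ^ 2)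
    (((hfc.norm).pow 2).measurable)
    (fun x _ => by
      show ‖fderiv ℝ φ x‖ ^ 2 = ‖fderiv ℝ φ (‖x‖ • e3)‖ ^ 2
      rw [fderiv_norm_radial hφ hrad x (‖x‖ • e3) (hnx x).symm]) hI1
  obtain ⟨P2, E2⟩ := radial_setIntegral m hm (fun y => ‖φ y‖ ^ 2 / ‖y‖ ^ 2)
    (((hφc.norm.pow 2).measurable).div ((continuous_norm.pow 2).measurable))
    (fun x hx => by
      show ‖φ x‖ ^ 2 / ‖x‖ ^ 2 = ‖φ (‖x‖ • e3)‖ ^ 2 / ‖(‖x‖ • e3)‖ ^ 2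
      rw [hrad x (‖x‖ • e3) (hnx x).symm, hnx x]) hI2
  obtain ⟨P3, E6⟩ := radial_setIntegral m hm (fun y => ‖φ y‖ ^ 6)
    ((hφc.norm.pow 6).measurable)
    (fun x _ => by
      show ‖φ x‖ ^ 6 = ‖φ (‖x‖ • e3)‖ ^ 6
      rw [hrad x (‖x‖ • e3) (hnx x).symm]) hI3
  -- 1D data
  have hgC1 : ContDiff ℝ 1 (fun r : ℝ => φ (r • e3)) :=
    hφ.comp (contDiff_id.smul contDiff_const)
  have hDc : Continuous (fun r : ℝ => ‖fderiv ℝ φ (r • e3)‖) :=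
    (hfc.comp (continuous_id.smul continuous_const)).norm
  have hDb : ∀ r : ℝ, ‖deriv (fun r : ℝ => φ (r • e3)) r‖ ≤ ‖fderiv ℝ φ (r • e3)‖ := by
    intro r
    have h1 : HasDerivAt (fun s : ℝ => s • e3) ((1:ℝ) • e3) r :=
      (hasDerivAt_id r).smul_const e3
    have h1' : HasDerivAt (fun s : ℝ => s • e3) e3 r := by simpa using h1
    have h2 : HasDerivAt (fun r : ℝ => φ (r • e3)) (fderiv ℝ φ (r • e3) e3) r :=
      (hφ.differentiable one_ne_zero (r • e3)).hasFDerivAt.comp_hasDerivAt r h1'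
    rw [h2.deriv]
    exact ((fderiv ℝ φ (r • e3)).le_opNorm e3).trans (by rw [norm_e3, mul_one])
  -- convert P2 to the g-form
  have heq2 : EqOn (fun r : ℝ => r ^ 2 * (‖φ (r • e3)‖ ^ 2 / ‖r • e3‖ ^ 2))
      (fun r : ℝ => ‖φ (r • e3)‖ ^ 2) (Ioi m) := by
    intro r hr
    have hr0 : 0 < r := lt_of_le_of_lt hm hr
    simp only []
    rw [norm_smul_e3 r hr0.le]
    field_simp
  have hB : IntegrableOn (fun r : ℝ => ‖φ (r • e3)‖ ^ 2) (Ioi m) :=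
    P2.congr_fun heq2 measurableSet_Ioi
  have eqB : (∫ r in Ioi m, r ^ 2 * (‖φ (r • e3)‖ ^ 2 / ‖r • e3‖ ^ 2))
      = ∫ r in Ioi m, ‖φ (r • e3)‖ ^ 2 :=
    setIntegral_congr_fun measurableSet_Ioi heq2
  have core := core1d (fun r : ℝ => φ (r • e3)) hgC1 m hm
    (fun r : ℝ => ‖fderiv ℝ φ (r • e3)‖) hDc hDb hB P1
  -- put everything together
  rw [E1, E2, E6, eqB]
  set A : ℝ := ∫ r in Ioi m, r ^ 2 * ‖fderiv ℝ φ (r • e3)‖ ^ 2 with hA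
  set B : ℝ := ∫ r in Ioi m, ‖φ (r • e3)‖ ^ 2 with hBdef
  set T : ℝ := ∫ r in Ioi m, r ^ 2 * ‖φ (r • e3)‖ ^ 6 with hT
  have hkey : 4 / (9 * c ^ 2) * (3 * c * A) * (3 * c * B) ^ 2 = 3 * c * (4 * A * B ^ 2) := by
    field_simp
    ring
  have hmul : 3 * c * T ≤ 3 * c * (4 * A * B ^ 2) :=
    mul_le_mul_of_nonneg_left core (by positivity)
  linarith
end
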